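/- Let F: B → A be a full exact embedding between abelian categories in which every object has finite length. If B contains two non-isomorphic indecomposable objects with the same composition factors (with multiplicities), then A also contains two non-isomorphic indecomposable objects with the same composition factors (with multiplicities). -/

import Mathlib

open CategoryTheory CategoryTheory.Limits

universe v₁ v₂ u₁ u₂

/-- A composition chain for an object `X` of an abelian category: a chain of monomorphisms
starting at a zero object and ending at `X`, all of whose cokernels (the composition
factors) are simple. -/
structure CompChain {A : Type u₁} [Category.{v₁} A] [Abelian A] (X : A) where
  n : ℕ
  obj : Fin (n + 1) → A
  map : ∀ i : Fin n, obj i.castSucc ⟶ obj i.succ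
  mono : ∀ i, Mono (map i)
  simpleFactor : ∀ i, Simple (cokernel (map i))
  bot : IsZero (obj 0)
  top : obj (Fin.last n) ≅ X

/-- Every object of the abelian category has finite length. -/
def AllFiniteLength (A : Type u₁) [Category.{v₁} A] [Abelian A] : Prop :=
  ∀ X : A, Nonempty (CompChain X)

/-- Two objects have the same composition factors with the same multiplicities. -/
def SameFactors {A : Type u₁} [Category.{v₁} A] [Abelian A] (X Y : A) : Prop :=
  ∃ (cX : CompChain X) (cY : CompChain Y) (e : Fin cX.n ≃ Fin cY.n),
    ∀ i, Nonempty (cokernel (cX.map i) ≅ cokernel (cY.map (e i)))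

/-- An object of an abelian category is indecomposable. -/
def IndecomposableObj {A : Type u₁} [Category.{v₁} A] [Abelian A] (X : A) : Prop :=
  ¬ IsZero X ∧ ∀ Y Z : A, Nonempty (X ≅ Y ⊞ Z) → IsZero Y ∨ IsZero Z

/-! ### Auxiliary list lemmas -/

theorem aux_perm_equiv {α : Type*} {L₁ L₂ : List α} (h : L₁.Perm L₂) :
    ∃ e : Fin L₁.length ≃ Fin L₂.length,
      ∀ i : Fin L₁.length, L₁.get i = L₂.get (e i) := by
  induction h with
  | nil => exact ⟨Equiv.refl _, fun i => i.elim0⟩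
  | cons x h ih =>
    obtain ⟨e, he⟩ := ih
    refine ⟨(finSuccEquiv _).trans ((e.optionCongr).trans (finSuccEquiv _).symm), ?_⟩
    intro i
    induction i using Fin.cases with
    | zero => simp
    | succ j => simpa using he j
  | swap x y l =>
    refine ⟨(Equiv.swap 0 1 : Fin (l.length + 2) ≃ Fin (l.length + 2)), ?_⟩
    intro i
    induction i using Fin.cases with
    | zero =>
      show (y :: x :: l).get (0 : Fin (l.length + 2)) =
        (x :: y :: l).get ((Equiv.swap (0 : Fin (l.length + 2)) 1) 0)
      rw [Equiv.swap_apply_left]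
      simp
    | succ j =>
      induction j using Fin.cases with
      | zero =>
        show (y :: x :: l).get (Fin.succ (0 : Fin (l.length + 1))) =
          (x :: y :: l).get ((Equiv.swap (0 : Fin (l.length + 2)) 1)
            (Fin.succ (0 : Fin (l.length + 1))))
        have h0 : Fin.succ (0 : Fin (l.length + 1)) = (1 : Fin (l.length + 2)) := by
          simp [Fin.ext_iff]
        rw [h0, Equiv.swap_apply_right]
        simp
      | succ k =>
        show (y :: x :: l).get k.succ.succ =
          (x :: y :: l).get ((Equiv.swap (0 : Fin (l.length + 2)) 1) k.succ.succ)
        rw [Equiv.swap_apply_of_ne_of_ne (by simp [Fin.ext_iff]) (by simp [Fin.ext_iff])]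
        simp
  | trans h1 h2 ih1 ih2 =>
    obtain ⟨e1, he1⟩ := ih1
    obtain ⟨e2, he2⟩ := ih2
    exact ⟨e1.trans e2, fun i => (he1 i).trans (he2 _)⟩

theorem aux_ofFn_perm {α : Type*} {m n : ℕ} (f : Fin n → α) (σ : Fin m ≃ Fin n) :
    (List.ofFn fun i => f (σ i)).Perm (List.ofFn f) := by
  have hmn : m = n := by simpa using Fintype.card_congr σ
  subst hmn
  exact Equiv.Perm.ofFn_comp_perm σ f

theorem aux_flatten_perm {α : Type*} {l₁ l₂ : List (List α)} (h : l₁.Perm l₂) :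
    l₁.flatten.Perm l₂.flatten := by
  induction h with
  | nil => rfl
  | cons x h ih => simpa using ih.append_left x
  | swap x y l =>
    simp only [List.flatten_cons]
    rw [← List.append_assoc, ← List.append_assoc]
    exact (List.perm_append_comm).append_right l.flatten
  | trans _ _ ih1 ih2 => exact ih1.trans ih2

theorem aux_flatten_singletons {α : Type*} : ∀ {n : ℕ} (f : Fin n → α),
    (List.ofFn fun i => [f i]).flatten = List.ofFn f := by
  intro n
  induction n with
  | zero => intro f; simp
  | succ n ih => intro f; simp [List.ofFn_succ, ih]

/-! ### Chains of monomorphisms with prescribed simple factors -/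

section ChnA

open ZeroObject

variable {A : Type u₁} [Category.{v₁} A] [Abelian A]

/-- Realizability of a list of simple factors by a chain of monos ending at `X`. -/
inductive Chn : A → List A → Prop
  | nil {X : A} (h : IsZero X) : Chn X []
  | cons {U V : A} (f : U ⟶ V) (hm : Mono f) {L : List A} {S : A} (hU : Chn U L)
      (hS : Nonempty (cokernel f ≅ S)) (hsimp : Simple S) : Chn V (L ++ [S])

lemma chn_iso {X Y : A} {L : List A} (h : Chn X L) (e : X ≅ Y) : Chn Y L := by
  cases h with
  | nil hz => exact Chn.nil (hz.of_iso e.symm)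
  | cons f hm hU hS hsimp =>
    haveI := hm
    exact Chn.cons (f ≫ e.hom) (mono_comp _ _) hU
      ⟨(cokernelCompIsIso f e.hom) ≪≫ hS.some⟩ hsimp

/-- a mono is the kernel of its cokernel, in convenient form -/
noncomputable def monoKerCoker {U V : A} (f : U ⟶ V) [Mono f] :
    IsLimit (KernelFork.ofι f (cokernel.condition f)) :=
  Abelian.monoIsKernelOfCokernel (CokernelCofork.ofπ (cokernel.π f) (cokernel.condition f))
    (cokernelIsCokernel f)

lemma pb_coker {V C W : A} (π : V ⟶ C) [Epi π] (g : W ⟶ C) [Mono g] :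
    Nonempty (cokernel (pullback.fst π g) ≅ cokernel g) := by
  have w1 : pullback.fst π g ≫ π ≫ cokernel.π g = 0 := by
    rw [pullback.condition_assoc, cokernel.condition, comp_zero]
  have hg := monoKerCoker g
  have hlim : IsLimit (KernelFork.ofι (pullback.fst π g) w1) := by
    refine KernelFork.IsLimit.ofι' _ _ (fun {T} s hs => ?_)
    have hs' : (s ≫ π) ≫ cokernel.π g = 0 := by simpa using hs
    obtain ⟨l, hl⟩ := KernelFork.IsLimit.lift' hg (s ≫ π) hs'
    exact ⟨pullback.lift s l hl.symm, pullback.lift_fst _ _ _⟩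
  haveI : Epi (π ≫ cokernel.π g) := epi_comp _ _
  have hcolim := Abelian.epiIsCokernelOfKernel _ hlim
  exact ⟨(cokernelIsCokernel (pullback.fst π g)).coconePointUniqueUpToIso hcolim⟩

lemma chn_splice {C : A} {L₂ : List A} (hC : Chn C L₂) :
    ∀ {V : A} (π : V ⟶ C), Epi π → ∀ {U : A} (f : U ⟶ V) (w : f ≫ π = 0),
      IsLimit (KernelFork.ofι f w) → ∀ {L₁ : List A}, Chn U L₁ → Chn V (L₁ ++ L₂) := by
  induction hC with
  | nil h =>
    intro V π hπ U f w hf L₁ hU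
    have hπ0 : π = 0 := h.eq_of_tgt _ _
    have hmf : Mono f := ⟨fun {T} a b hab => Fork.IsLimit.hom_ext hf hab⟩
    obtain ⟨l, hl⟩ := KernelFork.IsLimit.lift' hf (𝟙 V) (by rw [hπ0, comp_zero])
    have hl' : l ≫ f = 𝟙 V := hl
    have hiso : U ≅ V := by
      refine ⟨f, l, ?_, hl'⟩
      rw [← cancel_mono f, Category.assoc, hl', Category.id_comp, Category.comp_id]
    rw [List.append_nil]
    exact chn_iso hU hiso
  | @cons W C' g hm L' S hW hS hsimp IH =>
    intro V π hπ U f w hf L₁ hU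
    haveI := hπ; haveI := hm
    have hcond : f ≫ π = (0 : U ⟶ W) ≫ g := by rw [w, zero_comp]
    set u : U ⟶ pullback π g := pullback.lift f 0 hcond with hu_def
    have huf : u ≫ pullback.fst π g = f := pullback.lift_fst _ _ _
    have hu : u ≫ pullback.snd π g = 0 := pullback.lift_snd _ _ _
    have hmf : Mono f := ⟨fun {T} a b hab => Fork.IsLimit.hom_ext hf hab⟩
    have hmu : Mono u := mono_of_mono_fac huf
    have hker : IsLimit (KernelFork.ofι u hu) := by
      refine KernelFork.IsLimit.ofι' _ _ (fun {T} s hs => ?_)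
      have hs' : (s ≫ pullback.fst π g) ≫ π = 0 := by
        rw [Category.assoc, pullback.condition, ← Category.assoc, hs, zero_comp]
      obtain ⟨l, hl⟩ := KernelFork.IsLimit.lift' hf (s ≫ pullback.fst π g) hs'
      have hl' : l ≫ f = s ≫ pullback.fst π g := hl
      refine ⟨l, ?_⟩
      apply pullback.hom_ext
      · rw [Category.assoc, huf, hl']
      · rw [Category.assoc, hu, comp_zero, hs]
    have hP : Chn (pullback π g) (L₁ ++ L') :=
      IH (pullback.snd π g) inferInstance u hu hker hU
    have := Chn.cons (pullback.fst π g) inferInstance hP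
      ⟨(pb_coker π g).some ≪≫ hS.some⟩ hsimp
    rwa [List.append_assoc] at this

lemma chn_splice0 {U V : A} (f : U ⟶ V) [Mono f] {L₁ L₂ : List A} (hU : Chn U L₁)
    (hC : Chn (cokernel f) L₂) : Chn V (L₁ ++ L₂) :=
  chn_splice hC (cokernel.π f) inferInstance f (cokernel.condition f) (monoKerCoker f) hU

lemma chn_single {M : A} (hs : Simple M) : Chn M [M] := by
  have h0 : IsZero (0 : A) := isZero_zero A
  have hm : Mono (0 : (0 : A) ⟶ M) := ⟨fun {T} a b _ => h0.eq_of_tgt a b⟩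
  exact Chn.cons (0 : (0 : A) ⟶ M) hm (Chn.nil h0) ⟨cokernelZeroIsoTarget⟩ hs

lemma chn_of_prechain : ∀ (n : ℕ) (obj : Fin (n + 1) → A)
    (map : ∀ i : Fin n, obj i.castSucc ⟶ obj i.succ), (∀ i, Mono (map i)) →
    IsZero (obj 0) → ∀ (FL : Fin n → List A), (∀ i, Chn (cokernel (map i)) (FL i)) →
    Chn (obj (Fin.last n)) (List.ofFn FL).flatten := by
  intro n
  induction n with
  | zero =>
    intro obj map hm hb FL hFL
    simp only [List.ofFn_zero, List.flatten_nil]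
    exact Chn.nil (by convert hb using 2; simp)
  | succ n ih =>
    intro obj map hm hb FL hFL
    have hP : Chn (obj ((Fin.last n).castSucc))
        (List.ofFn fun i : Fin n => FL i.castSucc).flatten := by
      refine ih (fun i => obj i.castSucc) (fun i => map i.castSucc) (fun i => hm _) ?_
        (fun i => FL i.castSucc) (fun i => hFL _)
      convert hb using 2
      simp
    haveI := hm (Fin.last n)
    have := chn_splice0 (map (Fin.last n)) hP (hFL (Fin.last n))
    have heq : (List.ofFn FL).flatten
        = (List.ofFn fun i : Fin n => FL i.castSucc).flatten ++ FL (Fin.last n) := by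
      rw [List.ofFn_succ']
      simp [List.concat_eq_append]
    rw [heq]
    exact this

lemma chn_of_compChain {X : A} (c : CompChain X) :
    Chn X (List.ofFn fun i => cokernel (c.map i)) := by
  have h := chn_of_prechain c.n c.obj c.map c.mono c.bot
      (fun i => [cokernel (c.map i)]) (fun i => chn_single (c.simpleFactor i))
  rw [aux_flatten_singletons] at h
  exact chn_iso h c.top

/-! ### Turning a `Chn` back into a `CompChain` -/

section Ext
variable {U V : A} (c : CompChain U)

def extObj (V : A) : Fin (c.n + 1 + 1) → A :=
  fun k => if h : k.val ≤ c.n then c.obj ⟨k.val, Nat.lt_succ_of_le h⟩ else V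

lemma extObj_cs (k : Fin (c.n + 1)) :
    extObj c V k.castSucc = c.obj ⟨k.val, k.isLt⟩ := dif_pos (Nat.lt_succ_iff.mp k.isLt)

lemma extObj_s_lt (k : Fin (c.n + 1)) (h : k.val < c.n) :
    extObj c V k.succ = c.obj ⟨k.val + 1, Nat.succ_lt_succ h⟩ :=
  dif_pos (by simp only [Fin.val_succ]; omega)

lemma extObj_s_ge (k : Fin (c.n + 1)) (h : ¬ k.val < c.n) :
    extObj c V k.succ = V := dif_neg (by simp only [Fin.val_succ]; omega)

noncomputable def extMap (f : U ⟶ V) : ∀ k : Fin (c.n + 1),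
    extObj c V k.castSucc ⟶ extObj c V k.succ := fun k =>
  if h : k.val < c.n then
    eqToHom (extObj_cs c k) ≫ c.map ⟨k.val, h⟩ ≫ eqToHom (extObj_s_lt c k h).symm
  else
    eqToHom ((extObj_cs c k).trans
        (congrArg c.obj (Fin.ext (by have := k.isLt; simp only [Fin.val_last]; omega)))) ≫
      c.top.hom ≫ f ≫ eqToHom (extObj_s_ge c k h).symm

lemma extMap_mono (f : U ⟶ V) [Mono f] (k : Fin (c.n + 1)) : Mono (extMap c f k) := by
  unfold extMap
  split
  · haveI := c.mono ⟨k.val, by assumption⟩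
    apply mono_comp
  · apply mono_comp

lemma extMap_coker_lt (f : U ⟶ V) (k : Fin (c.n + 1)) (h : k.val < c.n) :
    Nonempty (cokernel (extMap c f k) ≅ cokernel (c.map ⟨k.val, h⟩)) := by
  unfold extMap
  rw [dif_pos h]
  exact ⟨cokernelEpiComp _ _ ≪≫ cokernelCompIsIso _ _⟩

lemma extMap_coker_last (f : U ⟶ V) (k : Fin (c.n + 1)) (h : ¬ k.val < c.n) :
    Nonempty (cokernel (extMap c f k) ≅ cokernel f) := by
  unfold extMap
  rw [dif_neg h]
  exact ⟨cokernelEpiComp _ _ ≪≫ cokernelEpiComp _ _ ≪≫ cokernelCompIsIso _ _⟩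

end Ext

lemma chn_to_compChain {X : A} {L : List A} (h : Chn X L) :
    ∃ c : CompChain X, c.n = L.length ∧
      ∀ (i : ℕ) (h1 : i < c.n) (h2 : i < L.length),
        Nonempty (cokernel (c.map ⟨i, h1⟩) ≅ L[i]) := by
  induction h with
  | @nil Z hz =>
    refine ⟨⟨0, fun _ => Z, fun i => i.elim0, fun i => i.elim0, fun i => i.elim0, hz,
      Iso.refl _⟩, rfl, ?_⟩
    intro i h1 _; exact absurd h1 (Nat.not_lt_zero i)
  | @cons U V f hm L S hU hS hsimp ih =>
    obtain ⟨c, hn, hfac⟩ := ih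
    haveI := hm
    refine ⟨⟨c.n + 1, extObj c V, extMap c f, extMap_mono c f, ?_, ?_, ?_⟩, ?_, ?_⟩
    · intro k
      by_cases hk : k.val < c.n
      · obtain ⟨e⟩ := extMap_coker_lt c f k hk
        haveI := c.simpleFactor ⟨k.val, hk⟩
        exact Simple.of_iso e
      · obtain ⟨e⟩ := extMap_coker_last c f k hk
        haveI : Simple (cokernel f) := Simple.of_iso hS.some
        exact Simple.of_iso e
    · have h0 : extObj c V 0 = c.obj ⟨0, Nat.succ_pos c.n⟩ := dif_pos (by simp)
      rw [h0]
      exact c.bot.of_iso (eqToIso (congrArg c.obj (Fin.ext (by simp))))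
    · exact eqToIso (show extObj c V (Fin.last (c.n + 1)) = V from dif_neg (by simp))
    · simp [hn]
    · intro i h1 h2
      by_cases hi : i < c.n
      · obtain ⟨e1⟩ := extMap_coker_lt c f ⟨i, h1⟩ hi
        have hiL : i < L.length := by omega
        obtain ⟨e2⟩ := hfac i hi hiL
        have hget : (L ++ [S])[i]'h2 = L[i]'hiL := List.getElem_append_left hiL
        rw [hget]
        exact ⟨e1 ≪≫ e2⟩
      · obtain ⟨e1⟩ := extMap_coker_last c f ⟨i, h1⟩ hi
        have hi' : i = L.length := by
          simp only [List.length_append, List.length_singleton] at h2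
          omega
        refine ⟨e1 ≪≫ hS.some ≪≫ eqToIso ?_⟩
        subst hi'
        simp

end ChnA

/-! ### Indecomposability -/

section Indec

variable {A : Type u₁} [Category.{v₁} A] [Abelian A]

lemma indec_idem {X : A} (hX : IndecomposableObj X) {q : X ⟶ X} (hq : q ≫ q = q) :
    q = 0 ∨ q = 𝟙 X := by
  let s : kernel (𝟙 X - q) ⟶ X := kernel.ι (𝟙 X - q)
  have hqker : q ≫ (𝟙 X - q) = 0 := by
    simp [Preadditive.comp_sub, hq]
  let r : X ⟶ kernel (𝟙 X - q) := kernel.lift (𝟙 X - q) q hqker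
  have hrs : r ≫ s = q := kernel.lift_ι _ _ _
  have hs1 : s ≫ q = s := by
    have h := kernel.condition (𝟙 X - q)
    rw [Preadditive.comp_sub, Category.comp_id, sub_eq_zero] at h
    exact h.symm
  have hsr : s ≫ r = 𝟙 _ := by
    rw [← cancel_mono s, Category.assoc, hrs, Category.id_comp, hs1]
  let t : kernel q ⟶ X := kernel.ι q
  have ht1 : (𝟙 X - q) ≫ q = 0 := by simp [Preadditive.sub_comp, hq]
  let u : X ⟶ kernel q := kernel.lift q (𝟙 X - q) ht1
  have hut : u ≫ t = 𝟙 X - q := kernel.lift_ι _ _ _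
  have ht2 : t ≫ (𝟙 X - q) = t := by
    rw [Preadditive.comp_sub, Category.comp_id, kernel.condition, sub_zero]
  have htu : t ≫ u = 𝟙 _ := by
    rw [← cancel_mono t, Category.assoc, hut, Category.id_comp, ht2]
  have hsu : s ≫ u = 0 := by
    rw [← cancel_mono t, Category.assoc, hut, zero_comp, Preadditive.comp_sub, hs1]
    simp
  have htr : t ≫ r = 0 := by
    rw [← cancel_mono s, Category.assoc, hrs, zero_comp]
    exact kernel.condition q
  have hiso : X ≅ kernel (𝟙 X - q) ⊞ kernel q := by
    refine ⟨biprod.lift r u, biprod.desc s t, ?_, ?_⟩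
    · rw [biprod.lift_desc, hrs, hut]
      simp
    · apply biprod.hom_ext'
      · apply biprod.hom_ext <;> simp [hsr, hsu]
      · apply biprod.hom_ext <;> simp [htu, htr]
  rcases hX.2 _ _ ⟨hiso⟩ with h | h
  · left
    rw [← hrs, h.eq_of_src s 0, comp_zero]
  · right
    have : u = 0 := h.eq_of_tgt u 0
    have h0 : (𝟙 X : X ⟶ X) - q = 0 := by rw [← hut, this, zero_comp]
    rw [sub_eq_zero] at h0
    exact h0.symm

end Indec

section Main

variable {B : Type u₁} {A : Type u₂} [Category.{v₁} B] [Category.{v₂} A]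
  [Abelian B] [Abelian A] (F : B ⥤ A) [F.Full] [F.Faithful]
  [PreservesFiniteLimits F] [PreservesFiniteColimits F]

noncomputable instance fAdditive : F.Additive := by
  have : PreservesBinaryBiproducts F := preservesBinaryBiproducts_of_preservesBinaryProducts F
  exact Functor.additive_of_preservesBinaryBiproducts F

set_option linter.unusedSectionVars false in
lemma indec_map {X : B} (hX : IndecomposableObj X) : IndecomposableObj (F.obj X) := by
  constructor
  · intro h
    apply hX.1
    have : F.map (𝟙 X) = F.map 0 := by
      rw [F.map_id, F.map_zero]
      exact h.eq_of_src _ _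
    have hid : 𝟙 X = (0 : X ⟶ X) := F.map_injective this
    rw [IsZero.iff_id_eq_zero]
    exact hid
  · rintro Y' Z' ⟨e⟩
    set p : F.obj X ⟶ F.obj X := e.hom ≫ biprod.fst ≫ biprod.inl ≫ e.inv with hp
    have hpp : p ≫ p = p := by
      simp only [hp, Category.assoc, Iso.inv_hom_id_assoc]
      rw [← Category.assoc (biprod.inl : Y' ⟶ Y' ⊞ Z') (biprod.fst), biprod.inl_fst]
      simp
    set q : X ⟶ X := F.preimage p with hqdef
    have hfq : F.map q = p := F.map_preimage p
    have hqq : q ≫ q = q := by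
      apply F.map_injective
      rw [F.map_comp, hfq, hpp]
    rcases indec_idem hX hqq with h | h
    · left
      have hp0 : p = 0 := by rw [← hfq, h, F.map_zero]
      have hx : (biprod.fst ≫ biprod.inl : Y' ⊞ Z' ⟶ Y' ⊞ Z') = 0 := by
        have : e.inv ≫ p ≫ e.hom = biprod.fst ≫ biprod.inl := by
          simp [hp]
        rw [← this, hp0]
        simp
      rw [IsZero.iff_id_eq_zero]
      have : (biprod.inl : Y' ⟶ Y' ⊞ Z') ≫
          (biprod.fst ≫ biprod.inl : Y' ⊞ Z' ⟶ Y' ⊞ Z') ≫ biprod.fst = 𝟙 Y' := by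
        rw [← Category.assoc, ← Category.assoc]
        simp
      rw [hx] at this
      simpa using this.symm
    · right
      have hp1 : p = 𝟙 _ := by rw [← hfq, h, F.map_id]
      have hx : (biprod.fst ≫ biprod.inl : Y' ⊞ Z' ⟶ Y' ⊞ Z') = 𝟙 _ := by
        have : e.inv ≫ p ≫ e.hom = biprod.fst ≫ biprod.inl := by
          simp [hp]
        rw [← this, hp1]
        simp
      rw [IsZero.iff_id_eq_zero]
      have h2 : (biprod.inr : Z' ⟶ Y' ⊞ Z') ≫
          (biprod.fst ≫ biprod.inl : Y' ⊞ Z' ⟶ Y' ⊞ Z') ≫ biprod.snd = 0 := by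
        rw [← Category.assoc]
        simp
      rw [hx] at h2
      simpa using h2

set_option linter.unusedSectionVars false in
lemma chn_map {X : B} (c : CompChain X) (FL : Fin c.n → List A)
    (hFL : ∀ i, Chn (cokernel (F.map (c.map i))) (FL i)) :
    Chn (F.obj X) (List.ofFn FL).flatten := by
  have h := chn_of_prechain c.n (fun i => F.obj (c.obj i)) (fun i => F.map (c.map i))
      (fun i => by haveI := c.mono i; infer_instance) (F.map_isZero c.bot) FL hFL
  exact chn_iso h (F.mapIso c.top)

end Main

/-- a full exact embedding transports a pair of non-isomorphic indecomposable
objects with the same composition factors. -/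
theorem stmt_6 {B : Type u₁} {A : Type u₂} [Category.{v₁} B] [Category.{v₂} A]
    [Abelian B] [Abelian A] (F : B ⥤ A) [F.Full] [F.Faithful]
    [PreservesFiniteLimits F] [PreservesFiniteColimits F]
    (hB : AllFiniteLength B) (hA : AllFiniteLength A)
    (X Y : B) (hX : IndecomposableObj X) (hY : IndecomposableObj Y)
    (hXY : SameFactors X Y) (hniso : IsEmpty (X ≅ Y)) :
    ∃ X' Y' : A, IndecomposableObj X' ∧ IndecomposableObj Y' ∧
      SameFactors X' Y' ∧ IsEmpty (X' ≅ Y') := by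
  obtain ⟨cX, cY, e, hiso⟩ := hXY
  refine ⟨F.obj X, F.obj Y, indec_map F hX, indec_map F hY, ?_,
    ⟨fun i => hniso.false (F.preimageIso i)⟩⟩
  -- comparison isomorphisms between cokernels of corresponding maps
  have cokerIso : ∀ i : Fin cX.n,
      Nonempty (cokernel (F.map (cX.map i)) ≅ cokernel (F.map (cY.map (e i)))) := by
    intro i
    obtain ⟨b⟩ := hiso i
    exact ⟨(PreservesCokernel.iso F _).symm ≪≫ F.mapIso b ≪≫ PreservesCokernel.iso F _⟩
  -- choose composition chains for the cokernels in A
  let d : ∀ i : Fin cX.n, CompChain (cokernel (F.map (cX.map i))) :=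
    fun i => (hA _).some
  let FL : Fin cX.n → List A := fun i => List.ofFn fun k => cokernel ((d i).map k)
  have hFL : ∀ i, Chn (cokernel (F.map (cX.map i))) (FL i) := fun i => chn_of_compChain (d i)
  have h1 : Chn (F.obj X) (List.ofFn FL).flatten := chn_map F cX FL hFL
  let FL' : Fin cY.n → List A := fun j => FL (e.symm j)
  have hFL' : ∀ j, Chn (cokernel (F.map (cY.map j))) (FL' j) := by
    intro j
    have h := hFL (e.symm j)
    have hcI := cokerIso (e.symm j)
    rw [e.apply_symm_apply] at hcI
    exact chn_iso h hcI.some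
  have h2 : Chn (F.obj Y) (List.ofFn FL').flatten := chn_map F cY FL' hFL'
  -- the two factor lists are permutations of each other
  have hperm : ((List.ofFn FL').flatten).Perm ((List.ofFn FL).flatten) :=
    aux_flatten_perm (aux_ofFn_perm FL e.symm)
  obtain ⟨ee, hee⟩ := aux_perm_equiv hperm
  obtain ⟨c₁, hn1, hfac1⟩ := chn_to_compChain h1
  obtain ⟨c₂, hn2, hfac2⟩ := chn_to_compChain h2
  refine ⟨c₁, c₂, (finCongr hn1).trans (ee.symm.trans (finCongr hn2.symm)), ?_⟩
  intro i
  have hiX : (i : ℕ) < (List.ofFn FL).flatten.length := hn1 ▸ i.isLt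
  have hj2 : ((ee.symm ⟨(i : ℕ), hiX⟩ : Fin _) : ℕ) < c₂.n := by
    rw [hn2]; exact (ee.symm ⟨(i : ℕ), hiX⟩).isLt
  have happ : ((finCongr hn1).trans (ee.symm.trans (finCongr hn2.symm))) i
      = ⟨((ee.symm ⟨(i : ℕ), hiX⟩ : Fin _) : ℕ), hj2⟩ := rfl
  obtain ⟨e1⟩ := hfac1 (i : ℕ) i.isLt hiX
  obtain ⟨e2⟩ := hfac2 _ hj2 (ee.symm ⟨(i : ℕ), hiX⟩).isLt
  have hg := (hee (ee.symm ⟨(i : ℕ), hiX⟩)).trans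
    (congrArg _ (ee.apply_symm_apply ⟨(i : ℕ), hiX⟩))
  simp only [List.get_eq_getElem] at hg
  exact ⟨e1 ≪≫ eqToIso hg.symm ≪≫ e2.symm ≪≫
    eqToIso (congrArg (fun k => cokernel (c₂.map k)) happ).symm⟩
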